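/- For every σ ∈ ((n-2)·π/2, n·π/2), the set Γ^σ := {λ ∈ ℝ^n : Σ_{i=1}^n arctan(λ_i) > σ} is convex. -/

import Mathlib

open Real Finset Set

lemma arctan_add_le {a b : ℝ} (ha : 0 ≤ a) (hb : 0 ≤ b) :
    arctan (a + b) ≤ arctan a + arctan b := by
  rcases lt_or_ge (arctan a + arctan b) (π / 2) with h | h
  · rcases eq_or_lt_of_le ha with rfl | ha'
    · simp
    · have hb' : b < a⁻¹ := by
        have h2 : arctan b < arctan a⁻¹ := by
          rw [arctan_inv_of_pos ha']; linarith
        exact arctan_strictMono.lt_iff_lt.mp h2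
      have hab : a * b < 1 := by
        have := mul_lt_mul_of_pos_left hb' ha'
        rwa [mul_inv_cancel₀ (ne_of_gt ha')] at this
      rw [arctan_add hab]
      apply arctan_strictMono.monotone
      have h1 : 0 < 1 - a * b := by linarith
      rw [le_div_iff₀ h1]
      nlinarith [mul_nonneg (mul_nonneg ha hb) (add_nonneg ha hb)]
  · exact le_trans (arctan_lt_pi_div_two _).le h

lemma arctan_sum_le {ι : Type*} (s : Finset ι) (c : ι → ℝ) (hc : ∀ i ∈ s, 0 ≤ c i) :
    arctan (∑ i ∈ s, c i) ≤ ∑ i ∈ s, arctan (c i) := by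
  classical
  induction s using Finset.induction with
  | empty => simp
  | insert _ _ h ih =>
    rename_i a s
    rw [Finset.sum_insert h, Finset.sum_insert h]
    have h1 : 0 ≤ c a := hc a (Finset.mem_insert_self a s)
    have h2 : 0 ≤ ∑ i ∈ s, c i :=
      Finset.sum_nonneg fun i hi => hc i (Finset.mem_insert_of_mem hi)
    calc arctan (c a + ∑ i ∈ s, c i) ≤ arctan (c a) + arctan (∑ i ∈ s, c i) :=
          arctan_add_le h1 h2
      _ ≤ arctan (c a) + ∑ i ∈ s, arctan (c i) := by
          have := ih (fun i hi => hc i (Finset.mem_insert_of_mem hi))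
          linarith

lemma arctan_sum_le_card {ι : Type*} (s : Finset ι) (x : ι → ℝ) :
    ∑ i ∈ s, arctan (x i) ≤ s.card * (π / 2) := by
  have := Finset.sum_le_card_nsmul s (fun i => arctan (x i)) (π / 2)
    (fun i _ => (arctan_lt_pi_div_two _).le)
  rwa [nsmul_eq_mul] at this

lemma key_ineq {N : ℕ} (x a : Fin N → ℝ)
    (hS : ((N : ℝ) - 2) * (π / 2) < ∑ i, arctan (x i))
    (ha : ∑ i, a i = 0) :
    0 ≤ ∑ i, x i * a i ^ 2 := by
  classical
  by_cases hpos : ∀ i, 0 ≤ x i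
  · exact Finset.sum_nonneg fun i _ => mul_nonneg (hpos i) (sq_nonneg _)
  push_neg at hpos
  obtain ⟨k, hk⟩ := hpos

  have hxk : 0 < -x k := by linarith
  -- Step A : every other coordinate exceeds -x k > 0
  have hpair : ∀ i, i ≠ k → -x k < x i := by
    intro i hik
    have hcard : ((Finset.univ.erase k).erase i).card = N - 2 := by
      rw [Finset.card_erase_of_mem (by simp [Finset.mem_erase, hik]),
        Finset.card_erase_of_mem (Finset.mem_univ k)]
      simp only [Finset.card_univ, Fintype.card_fin]
      omega
    have hsplit : arctan (x k) + (arctan (x i) + ∑ j ∈ (Finset.univ.erase k).erase i, arctan (x j)) = ∑ j, arctan (x j) := by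
      rw [Finset.add_sum_erase _ (fun j => arctan (x j))
          (Finset.mem_erase.mpr ⟨hik, Finset.mem_univ i⟩),
        Finset.add_sum_erase _ (fun j => arctan (x j)) (Finset.mem_univ k)]
    have hN : 2 ≤ N := by
      have : Nontrivial (Fin N) := ⟨⟨i, k, hik⟩⟩
      have := Fintype.one_lt_card (α := Fin N)
      simp at this; omega
    have hrest : ∑ j ∈ (Finset.univ.erase k).erase i, arctan (x j) ≤ ((N : ℝ) - 2) * (π / 2) := by
      have h1 := arctan_sum_le_card ((Finset.univ.erase k).erase i) x
      rw [hcard] at h1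
      have hcast : ((N - 2 : ℕ) : ℝ) = (N : ℝ) - 2 := by push_cast [hN]; ring
      rwa [hcast] at h1
    have hsum2 : 0 < arctan (x i) + arctan (x k) := by
      rw [← hsplit] at hS; linarith
    have h3 : arctan (-x k) < arctan (x i) := by
      rw [arctan_neg]; linarith
    exact arctan_strictMono.lt_iff_lt.mp h3
  have hxipos : ∀ i, i ≠ k → 0 < x i := fun i hi => lt_trans hxk (hpair i hi)
  -- Step B : sum of reciprocals bound
  have hB : ∑ i ∈ Finset.univ.erase k, (x i)⁻¹ ≤ (-x k)⁻¹ := by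
    have hsplit : arctan (x k) + ∑ j ∈ Finset.univ.erase k, arctan (x j) = ∑ j, arctan (x j) :=
      Finset.add_sum_erase _ (fun j => arctan (x j)) (Finset.mem_univ k)
    have hcard1 : (Finset.univ.erase k).card = N - 1 := by
      rw [Finset.card_erase_of_mem (Finset.mem_univ k)]; simp
    have hN1 : 1 ≤ N := Nat.pos_of_ne_zero (by rintro rfl; exact k.elim0)
    have hrw : ∑ i ∈ Finset.univ.erase k, arctan (x i)⁻¹
        = ((N : ℝ) - 1) * (π / 2) - ∑ i ∈ Finset.univ.erase k, arctan (x i) := by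
      rw [show (∑ i ∈ Finset.univ.erase k, arctan (x i)⁻¹)
          = ∑ i ∈ Finset.univ.erase k, (π / 2 - arctan (x i)) from
        Finset.sum_congr rfl fun i hi => arctan_inv_of_pos (hxipos i (Finset.mem_erase.mp hi).1),
        Finset.sum_sub_distrib, Finset.sum_const, hcard1, nsmul_eq_mul]
      have hcast : ((N - 1 : ℕ) : ℝ) = (N : ℝ) - 1 := by push_cast [hN1]; ring
      rw [hcast]
    have hlt : ∑ i ∈ Finset.univ.erase k, arctan (x i)⁻¹ < arctan (-x k)⁻¹ := by
      rw [hrw, arctan_inv_of_pos hxk, arctan_neg]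
      linarith
    have hle : arctan (∑ i ∈ Finset.univ.erase k, (x i)⁻¹)
        ≤ ∑ i ∈ Finset.univ.erase k, arctan (x i)⁻¹ :=
      arctan_sum_le _ _ fun i hi => (inv_pos.mpr (hxipos i (Finset.mem_erase.mp hi).1)).le
    exact (arctan_strictMono.lt_iff_lt.mp (lt_of_le_of_lt hle hlt)).le
  -- Step C : Cauchy-Schwarz
  set s := Finset.univ.erase k with hs
  set T := ∑ i ∈ s, x i * a i ^ 2 with hT
  have hT0 : 0 ≤ T :=
    Finset.sum_nonneg fun i hi =>
      mul_nonneg (hxipos i (Finset.mem_erase.mp hi).1).le (sq_nonneg _)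
  have hC0 : 0 ≤ ∑ i ∈ s, (x i)⁻¹ :=
    Finset.sum_nonneg fun i hi => (inv_pos.mpr (hxipos i (Finset.mem_erase.mp hi).1)).le
  have hCS : (∑ i ∈ s, a i) ^ 2 ≤ T * ∑ i ∈ s, (x i)⁻¹ := by
    have h := Finset.sum_mul_sq_le_sq_mul_sq s (fun i => Real.sqrt (x i) * a i)
      (fun i => (Real.sqrt (x i))⁻¹)
    have e1 : ∀ i ∈ s, Real.sqrt (x i) * a i * (Real.sqrt (x i))⁻¹ = a i := by
      intro i hi
      have hx : 0 < x i := hxipos i (Finset.mem_erase.mp hi).1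
      field_simp
    have e2 : ∀ i ∈ s, (Real.sqrt (x i) * a i) ^ 2 = x i * a i ^ 2 := by
      intro i hi
      have hx : 0 < x i := hxipos i (Finset.mem_erase.mp hi).1
      rw [mul_pow, Real.sq_sqrt hx.le]
    have e3 : ∀ i ∈ s, ((Real.sqrt (x i))⁻¹) ^ 2 = (x i)⁻¹ := by
      intro i hi
      have hx : 0 < x i := hxipos i (Finset.mem_erase.mp hi).1
      rw [inv_pow, Real.sq_sqrt hx.le]
    rwa [Finset.sum_congr rfl e1, Finset.sum_congr rfl e2, Finset.sum_congr rfl e3] at h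
  have hsum_s : ∑ i ∈ s, a i = -a k := by
    have := Finset.add_sum_erase Finset.univ a (Finset.mem_univ k)
    rw [hs]
    rw [ha] at this; linarith
  have hak : a k ^ 2 ≤ T * (-x k)⁻¹ := by
    have h1 : T * ∑ i ∈ s, (x i)⁻¹ ≤ T * (-x k)⁻¹ := mul_le_mul_of_nonneg_left hB hT0
    calc a k ^ 2 = (∑ i ∈ s, a i) ^ 2 := by rw [hsum_s, neg_sq]
      _ ≤ T * ∑ i ∈ s, (x i)⁻¹ := hCS
      _ ≤ T * (-x k)⁻¹ := h1
  have hfinal : (-x k) * a k ^ 2 ≤ T := by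
    have := mul_le_mul_of_nonneg_left hak hxk.le
    rwa [mul_comm T _, ← mul_assoc, mul_inv_cancel₀ (ne_of_gt hxk), one_mul] at this
  have hsplit2 : ∑ i, x i * a i ^ 2 = x k * a k ^ 2 + T :=
    (Finset.add_sum_erase Finset.univ (fun i => x i * a i ^ 2) (Finset.mem_univ k)).symm
  rw [hsplit2]; linarith

lemma key_ineq' {m : ℕ} (σ : ℝ) (x v : Fin m → ℝ) (r : ℝ)
    (hσ : ((m : ℝ) - 1) * (π / 2) < σ)
    (hr : ∑ i, arctan (x i) + arctan r = σ) :
    0 ≤ ∑ i, x i * (v i / (1 + x i ^ 2)) ^ 2 + r * (∑ i, v i / (1 + x i ^ 2)) ^ 2 := by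
  classical
  set w := ∑ i, v i / (1 + x i ^ 2) with hw
  have hS' : (((m + 1 : ℕ) : ℝ) - 2) * (π / 2) < ∑ i, arctan ((Fin.snoc x r : Fin (m+1) → ℝ) i) := by
    rw [Fin.sum_univ_castSucc]
    simp only [Fin.snoc_castSucc, Fin.snoc_last]
    push_cast
    rw [show ((m : ℝ) + 1 - 2) = (m : ℝ) - 1 by ring]
    linarith
  have ha' : ∑ i, (Fin.snoc (fun i => v i / (1 + x i ^ 2)) (-w) : Fin (m+1) → ℝ) i = 0 := by
    rw [Fin.sum_univ_castSucc]
    simp only [Fin.snoc_castSucc, Fin.snoc_last]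
    rw [← hw]
    ring
  have h := key_ineq (Fin.snoc x r) (Fin.snoc (fun i => v i / (1 + x i ^ 2)) (-w)) hS' ha'
  rw [Fin.sum_univ_castSucc] at h
  simpa using h

lemma phi_convexOn {m : ℕ} (σ : ℝ) (hσ : ((m : ℝ) - 1) * (π / 2) < σ)
    (x d : Fin m → ℝ)
    (hI : Convex ℝ {t : ℝ | σ - ∑ i, arctan (x i + t * d i) < π / 2}) :
    ConvexOn ℝ {t : ℝ | σ - ∑ i, arctan (x i + t * d i) < π / 2}
      fun t => tan (σ - ∑ i, arctan (x i + t * d i)) := by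
  classical
  set u : ℝ → ℝ := fun t => σ - ∑ i, arctan (x i + t * d i) with hu
  set u' : ℝ → ℝ := fun t => -∑ i, d i / (1 + (x i + t * d i) ^ 2) with hu'def
  set u'' : ℝ → ℝ := fun t => ∑ i, 2 * (x i + t * d i) * d i ^ 2 / (1 + (x i + t * d i) ^ 2) ^ 2
    with hu''def
  have hu_lb : ∀ t, -(π / 2) < u t := by
    intro t
    have h1 : ∑ i, arctan (x i + t * d i) ≤ (m : ℝ) * (π / 2) := by
      have h2 := arctan_sum_le_card (Finset.univ : Finset (Fin m)) (fun i => x i + t * d i)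
      simpa using h2
    have : (0:ℝ) < π / 2 := by positivity
    simp only [hu]
    nlinarith
  have hIopen : IsOpen {t : ℝ | u t < π / 2} := by
    have hcont : Continuous u := by
      apply Continuous.sub continuous_const
      exact continuous_finset_sum _ fun i _ =>
        Real.continuous_arctan.comp (by continuity)
    exact isOpen_lt hcont continuous_const
  have hlin : ∀ (i : Fin m) (t : ℝ), HasDerivAt (fun t : ℝ => x i + t * d i) (d i) t := by
    intro i t
    simpa using ((hasDerivAt_id t).mul_const (d i)).const_add (x i)
  have hu' : ∀ t, HasDerivAt u (u' t) t := by
    intro t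
    have hsum : HasDerivAt (fun t => ∑ i, arctan (x i + t * d i))
        (∑ i, d i / (1 + (x i + t * d i) ^ 2)) t := by
      apply HasDerivAt.fun_sum
      intro i _
      have h1 := (Real.hasDerivAt_arctan (x i + t * d i)).comp t (hlin i t)
      refine h1.congr_deriv ?_
      ring
    simpa using hsum.const_sub σ
  have hu'' : ∀ t, HasDerivAt u' (u'' t) t := by
    intro t
    have hterm : ∀ i : Fin m, HasDerivAt (fun t => d i / (1 + (x i + t * d i) ^ 2))
        (-(2 * (x i + t * d i) * d i ^ 2 / (1 + (x i + t * d i) ^ 2) ^ 2)) t := by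
      intro i
      have hq : HasDerivAt (fun t => 1 + (x i + t * d i) ^ 2) (2 * (x i + t * d i) * d i) t := by
        have := ((hlin i t).pow 2).const_add 1
        refine this.congr_deriv ?_
        ring
      have hq0 : (1 + (x i + t * d i) ^ 2) ≠ 0 := by positivity
      have h5 := (hq.inv hq0).const_mul (d i)
      have h6 : HasDerivAt (fun t => d i / (1 + (x i + t * d i) ^ 2))
          (d i * (-(2 * (x i + t * d i) * d i) / (1 + (x i + t * d i) ^ 2) ^ 2)) t := by
        simpa [div_eq_mul_inv] using h5
      convert h6 using 1
      field_simp
    have hsum := HasDerivAt.fun_sum (fun i (_ : i ∈ Finset.univ) => hterm i)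
    have := hsum.neg
    refine this.congr_deriv ?_
    rw [← Finset.sum_neg_distrib]
    simp
    rfl
  have hcos : ∀ t ∈ {t : ℝ | u t < π / 2}, Real.cos (u t) ≠ 0 := fun t ht =>
    (Real.cos_pos_of_mem_Ioo ⟨hu_lb t, ht⟩).ne'
  have hphi' : ∀ t ∈ {t : ℝ | u t < π / 2},
      HasDerivAt (fun s => tan (u s)) ((1 + tan (u t) ^ 2) * u' t) t := by
    intro t ht
    have h1 := (Real.hasDerivAt_tan (hcos t ht)).comp t (hu' t)
    refine h1.congr_deriv ?_
    rw [one_div, ← Real.inv_one_add_tan_sq (hcos t ht), inv_inv]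
  have hphi'' : ∀ t ∈ {t : ℝ | u t < π / 2},
      HasDerivAt (fun s => (1 + tan (u s) ^ 2) * u' s)
        (2 * tan (u t) * ((1 + tan (u t) ^ 2) * u' t) * u' t + (1 + tan (u t) ^ 2) * u'' t) t := by
    intro t ht
    have hf : HasDerivAt (fun s => 1 + tan (u s) ^ 2)
        (2 * tan (u t) * ((1 + tan (u t) ^ 2) * u' t)) t := by
      have := ((hphi' t ht).pow 2).const_add 1
      refine this.congr_deriv ?_
      ring
    exact hf.mul (hu'' t)
  have hnonneg : ∀ t ∈ {t : ℝ | u t < π / 2},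
      0 ≤ 2 * tan (u t) * ((1 + tan (u t) ^ 2) * u' t) * u' t + (1 + tan (u t) ^ 2) * u'' t := by
    intro t ht
    have harct : arctan (tan (u t)) = u t := arctan_tan (hu_lb t) ht
    have hr : ∑ i, arctan (x i + t * d i) + arctan (tan (u t)) = σ := by
      rw [harct]; simp only [hu]; ring
    have hk := key_ineq' σ (fun i => x i + t * d i) d (tan (u t)) hσ hr
    have h2 : u'' t = 2 * ∑ i, (x i + t * d i) * (d i / (1 + (x i + t * d i) ^ 2)) ^ 2 := by
      simp only [hu''def, Finset.mul_sum]
      apply Finset.sum_congr rfl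
      intro i _
      have hq0 : (1 + (x i + t * d i) ^ 2) ≠ 0 := by positivity
      field_simp
    have e1 : u' t = -(∑ i, d i / (1 + (x i + t * d i) ^ 2)) := rfl
    have heq : 2 * tan (u t) * ((1 + tan (u t) ^ 2) * u' t) * u' t + (1 + tan (u t) ^ 2) * u'' t
        = 2 * (1 + tan (u t) ^ 2) *
          (∑ i, (x i + t * d i) * (d i / (1 + (x i + t * d i) ^ 2)) ^ 2
            + tan (u t) * (∑ i, d i / (1 + (x i + t * d i) ^ 2)) ^ 2) := by
      rw [h2, e1]; ring
    rw [heq]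
    have hP : (0:ℝ) ≤ 2 * (1 + tan (u t) ^ 2) := by positivity
    exact mul_nonneg hP hk
  have hint : interior {t : ℝ | u t < π / 2} = {t : ℝ | u t < π / 2} := hIopen.interior_eq
  apply convexOn_of_hasDerivWithinAt2_nonneg hI
    (f' := fun t => (1 + tan (u t) ^ 2) * u' t)
    (f'' := fun t => 2 * tan (u t) * ((1 + tan (u t) ^ 2) * u' t) * u' t
      + (1 + tan (u t) ^ 2) * u'' t)
  · exact fun t ht => ((hphi' t ht).continuousAt).continuousWithinAt
  · rw [hint]; exact fun t ht => (hphi' t ht).hasDerivWithinAt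
  · rw [hint]; exact fun t ht => (hphi'' t ht).hasDerivWithinAt
  · rw [hint]; exact hnonneg

theorem lagrangian_superlevel_convex (n : ℕ) (σ : ℝ)
    (hσ : σ ∈ Set.Ioo ((n - 2 : ℝ) * (π / 2)) ((n : ℝ) * (π / 2))) :
    Convex ℝ {lam : Fin n → ℝ | σ < ∑ i, arctan (lam i)} := by
  induction n generalizing σ with
  | zero =>
    have hσ0 : σ < 0 := by have := hσ.2; norm_num at this; exact this
    have hset : {lam : Fin 0 → ℝ | σ < ∑ i, arctan (lam i)} = Set.univ := by
      ext lam
      simp only [Set.mem_setOf_eq, Set.mem_univ, iff_true, Finset.univ_eq_empty,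
        Finset.sum_empty]
      linarith
    rw [hset]; exact convex_univ
  | succ m IH =>
    have hpi : (0:ℝ) < π / 2 := by positivity
    have hσ1 : ((m : ℝ) - 1) * (π / 2) < σ := by
      have h := hσ.1; push_cast at h; linarith
    have hσ2 : σ < ((m : ℝ) + 1) * (π / 2) := by
      have h := hσ.2; push_cast at h; linarith
    have hD : Convex ℝ {mu : Fin m → ℝ | σ - π / 2 < ∑ i, arctan (mu i)} := by
      apply IH (σ - π / 2)
      constructor
      · nlinarith
      · nlinarith
    -- sums are bounded
    have hSle : ∀ lam : Fin (m+1) → ℝ, ∑ i : Fin m, arctan (lam i.castSucc) ≤ (m : ℝ) * (π / 2) := by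
      intro lam
      have h := arctan_sum_le_card (Finset.univ : Finset (Fin m)) (fun i => lam i.castSucc)
      simpa using h
    have hmem : ∀ lam : Fin (m+1) → ℝ,
        σ < ∑ i, arctan (lam i) ↔
          (σ - π / 2 < ∑ i : Fin m, arctan (lam i.castSucc) ∧
            tan (σ - ∑ i : Fin m, arctan (lam i.castSucc)) < lam (Fin.last m)) := by
      intro lam
      rw [Fin.sum_univ_castSucc]
      have hlow : -(π / 2) < σ - ∑ i : Fin m, arctan (lam i.castSucc) := by
        have := hSle lam; linarith
      constructor
      · intro h
        have h2 : σ - ∑ i : Fin m, arctan (lam i.castSucc) < arctan (lam (Fin.last m)) := by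
          linarith
        have h3 : σ - ∑ i : Fin m, arctan (lam i.castSucc) < π / 2 :=
          lt_trans h2 (arctan_lt_pi_div_two _)
        refine ⟨by linarith, ?_⟩
        have h4 := tan_lt_tan_of_lt_of_lt_pi_div_two hlow (arctan_lt_pi_div_two (lam (Fin.last m))) h2
        rwa [tan_arctan] at h4
      · rintro ⟨h1, h2⟩
        have h3 : arctan (tan (σ - ∑ i : Fin m, arctan (lam i.castSucc)))
            < arctan (lam (Fin.last m)) := arctan_strictMono h2
        rw [arctan_tan hlow (by linarith)] at h3
        linarith
    rw [convex_iff_forall_pos]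
    intro p hp q hq a b ha hb hab
    simp only [Set.mem_setOf_eq] at hp hq ⊢
    obtain ⟨hp1, hp2⟩ := (hmem p).mp hp
    obtain ⟨hq1, hq2⟩ := (hmem q).mp hq
    rw [hmem (a • p + b • q)]
    simp only [Pi.add_apply, Pi.smul_apply, smul_eq_mul]
    -- the convex interval I
    have hIconv : Convex ℝ {t : ℝ | σ - ∑ i : Fin m,
        arctan (p i.castSucc + t * (q i.castSucc - p i.castSucc)) < π / 2} := by
      intro t1 h1 t2 h2 c1 c2 hc1 hc2 hc
      simp only [Set.mem_setOf_eq, smul_eq_mul] at h1 h2 ⊢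
      have hX1 : (fun i : Fin m => p i.castSucc + t1 * (q i.castSucc - p i.castSucc)) ∈
          {mu : Fin m → ℝ | σ - π / 2 < ∑ i, arctan (mu i)} := by
        simp only [Set.mem_setOf_eq]; linarith
      have hX2 : (fun i : Fin m => p i.castSucc + t2 * (q i.castSucc - p i.castSucc)) ∈
          {mu : Fin m → ℝ | σ - π / 2 < ∑ i, arctan (mu i)} := by
        simp only [Set.mem_setOf_eq]; linarith
      have hcombo := hD hX1 hX2 hc1 hc2 hc
      simp only [Set.mem_setOf_eq, Pi.add_apply, Pi.smul_apply, smul_eq_mul] at hcombo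
      have heq : ∀ i : Fin m,
          c1 * (p i.castSucc + t1 * (q i.castSucc - p i.castSucc))
            + c2 * (p i.castSucc + t2 * (q i.castSucc - p i.castSucc))
          = p i.castSucc + (c1 * t1 + c2 * t2) * (q i.castSucc - p i.castSucc) := by
        intro i
        have hc' : c2 = 1 - c1 := by linarith
        rw [hc']; ring
      rw [Finset.sum_congr rfl (fun i _ => by rw [heq i])] at hcombo
      linarith
    have hconv := phi_convexOn σ hσ1 (fun i => p i.castSucc)
      (fun i => q i.castSucc - p i.castSucc) hIconv
    have h0mem : (0:ℝ) ∈ {t : ℝ | σ - ∑ i : Fin m,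
        arctan (p i.castSucc + t * (q i.castSucc - p i.castSucc)) < π / 2} := by
      simp only [Set.mem_setOf_eq, zero_mul, add_zero]
      linarith
    have h1mem : (1:ℝ) ∈ {t : ℝ | σ - ∑ i : Fin m,
        arctan (p i.castSucc + t * (q i.castSucc - p i.castSucc)) < π / 2} := by
      simp only [Set.mem_setOf_eq, one_mul]
      have e : ∀ i : Fin m, p i.castSucc + (q i.castSucc - p i.castSucc) = q i.castSucc :=
        fun i => by ring
      rw [Finset.sum_congr rfl (fun i _ => by rw [e i])]
      linarith
    have hkey := hconv.2 h0mem h1mem ha.le hb.le hab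
    simp only [smul_eq_mul, mul_zero, mul_one, zero_add, zero_mul, add_zero, one_mul] at hkey
    have ebz : ∀ i : Fin m, p i.castSucc + b * (q i.castSucc - p i.castSucc)
        = a * p i.castSucc + b * q i.castSucc := by
      intro i
      have ha' : a = 1 - b := by linarith
      rw [ha']; ring
    have eq1 : ∀ i : Fin m, p i.castSucc + (q i.castSucc - p i.castSucc) = q i.castSucc :=
      fun i => by ring
    have e2 : (∑ i : Fin m, arctan (a * p i.castSucc + b * q i.castSucc))
        = ∑ i : Fin m, arctan (p i.castSucc + b * (q i.castSucc - p i.castSucc)) :=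
      Finset.sum_congr rfl (fun i _ => by rw [ebz i])
    have e3 : (∑ i : Fin m, arctan (p i.castSucc + (q i.castSucc - p i.castSucc)))
        = ∑ i : Fin m, arctan (q i.castSucc) :=
      Finset.sum_congr rfl (fun i _ => by rw [eq1 i])
    rw [← e2, e3] at hkey
    have hp1' : (fun i : Fin m => p i.castSucc) ∈
        {mu : Fin m → ℝ | σ - π / 2 < ∑ i, arctan (mu i)} := hp1
    have hq1' : (fun i : Fin m => q i.castSucc) ∈
        {mu : Fin m → ℝ | σ - π / 2 < ∑ i, arctan (mu i)} := hq1
    constructor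
    · have hcombo := hD hp1' hq1' ha.le hb.le hab
      simp only [Set.mem_setOf_eq, Pi.add_apply, Pi.smul_apply, smul_eq_mul] at hcombo
      exact hcombo
    · have hlt : a * tan (σ - ∑ i : Fin m, arctan (p i.castSucc))
          + b * tan (σ - ∑ i : Fin m, arctan (q i.castSucc))
          < a * p (Fin.last m) + b * q (Fin.last m) :=
        add_lt_add (mul_lt_mul_of_pos_left hp2 ha) (mul_lt_mul_of_pos_left hq2 hb)
      exact lt_of_le_of_lt hkey hlt
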